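/- The Kleisli triple H₀ is a monad on sets: for every f : X → H₀ Y and every (d,e) ∈ H₀ X the pair f^*(d,e) again satisfies the flattening condition (so f^* is well defined), and the monad laws hold: f^* ∘ η = f for all f : X → H₀ Y; η^* = id on H₀ X; and (g^* ∘ f)^* = g^* ∘ f^* for all f : X → H₀ Y and g : Y → H₀ Z. -/

import Mathlib

open scoped ENNReal NNReal
open Classical

universe u v w

/-- Elements of `H₀ X`: a duration in `ℝ≥0∞` and a total evolution `ℝ≥0 → X`. -/
abbrev Traj0 (X : Type u) := ℝ≥0∞ × (ℝ≥0 → X)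

/-- The flattening condition: if the duration is finite, the evolution is constant
from the duration onwards.  Membership in `H₀ X` means exactly `Flat0`. -/
def Flat0 {X : Type u} (p : Traj0 X) : Prop :=
  ∀ t : ℝ≥0, p.1 ≤ (t : ℝ≥0∞) → p.2 t = p.2 p.1.toNNReal

/-- The unit of `H₀`. -/
def eta0 {X : Type u} (x : X) : Traj0 X := (0, fun _ => x)

/-- The Kleisli lifting `f^*` of `H₀`. -/
noncomputable def kl0 {X : Type u} {Y : Type v} (f : X → Traj0 Y) (p : Traj0 X) : Traj0 Y :=
  ((if p.1 ≠ ⊤ then p.1 + (f (p.2 p.1.toNNReal)).1 else ⊤),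
    fun t =>
      if (t : ℝ≥0∞) ≤ p.1 then (f (p.2 t)).2 0
      else (f (p.2 p.1.toNNReal)).2 (t - p.1.toNNReal))

section Aux

variable {X : Type u} {Y : Type v} {Z : Type w}

lemma kl0_dur (f : X → Traj0 Y) (p : Traj0 X) :
    (kl0 f p).1 = if p.1 ≠ ⊤ then p.1 + (f (p.2 p.1.toNNReal)).1 else ⊤ := rfl

lemma kl0_ev (f : X → Traj0 Y) (p : Traj0 X) (t : ℝ≥0) :
    (kl0 f p).2 t = if (t : ℝ≥0∞) ≤ p.1 then (f (p.2 t)).2 0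
      else (f (p.2 p.1.toNNReal)).2 (t - p.1.toNNReal) := rfl

lemma kl0_ev_key (f : X → Traj0 Y) (p : Traj0 X) (hd : p.1 ≠ ⊤) :
    (kl0 f p).2 (p.1.toNNReal + (f (p.2 p.1.toNNReal)).1.toNNReal)
      = (f (p.2 p.1.toNNReal)).2 (f (p.2 p.1.toNNReal)).1.toNNReal := by
  set a := p.1.toNNReal with ha'
  set b := (f (p.2 a)).1.toNNReal with hb'
  have ha : (a : ℝ≥0∞) = p.1 := ENNReal.coe_toNNReal hd
  rw [kl0_ev]
  by_cases h : ((a + b : ℝ≥0) : ℝ≥0∞) ≤ p.1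
  · rw [if_pos h]
    have hb0 : b = 0 := by
      rw [← ha, ENNReal.coe_le_coe] at h
      have : a + b ≤ a + 0 := by simpa using h
      exact le_antisymm (le_of_add_le_add_left this) (zero_le)
    rw [hb0, add_zero]
  · rw [if_neg h, add_tsub_cancel_left]

lemma kl0_flat (f : X → Traj0 Y) (hf : ∀ x, Flat0 (f x)) (p : Traj0 X) (hp : Flat0 p) :
    Flat0 (kl0 f p) := by
  intro t ht
  by_cases hd : p.1 = ⊤
  · rw [kl0_dur, if_neg (by simp [hd])] at ht
    exact absurd (top_le_iff.mp ht) ENNReal.coe_ne_top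
  set a := p.1.toNNReal with ha'
  have ha : (a : ℝ≥0∞) = p.1 := ENNReal.coe_toNNReal hd
  by_cases hB : (f (p.2 a)).1 = ⊤
  · rw [kl0_dur, if_pos hd, hB, add_top] at ht
    exact absurd (top_le_iff.mp ht) ENNReal.coe_ne_top
  set b := (f (p.2 a)).1.toNNReal with hb'
  have hAb : (f (p.2 a)).1 = (b : ℝ≥0∞) := (ENNReal.coe_toNNReal hB).symm
  have hq1 : (kl0 f p).1 = ((a + b : ℝ≥0) : ℝ≥0∞) := by
    rw [kl0_dur, if_pos hd, hAb, ← ha, ← ENNReal.coe_add]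
  have hqt : (kl0 f p).1.toNNReal = a + b := by rw [hq1, ENNReal.toNNReal_coe]
  have htab : a + b ≤ t := by
    rw [hq1, ENNReal.coe_le_coe] at ht
    exact ht
  have key : ∀ s : ℝ≥0, a + b ≤ s →
      (kl0 f p).2 s = (f (p.2 a)).2 b := by
    intro s hs
    rw [kl0_ev]
    by_cases h : ((s : ℝ≥0) : ℝ≥0∞) ≤ p.1
    · rw [if_pos h]
      have hsa : s ≤ a := by rw [← ha, ENNReal.coe_le_coe] at h; exact h
      have has : a ≤ s := le_trans (le_add_right le_rfl) hs
      have hb0 : b = 0 := by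
        have : a + b ≤ a + 0 := by simpa using le_trans hs hsa
        exact le_antisymm (le_of_add_le_add_left this) (zero_le)
      have hps : p.2 s = p.2 a := hp s (by rw [← ha]; exact_mod_cast has)
      rw [hps, hb0]
    · rw [if_neg h]
      have : (f (p.2 a)).1 ≤ ((s - a : ℝ≥0) : ℝ≥0∞) := by
        rw [hAb, ENNReal.coe_le_coe]
        exact le_tsub_of_add_le_left hs
      exact hf (p.2 a) (s - a) this
  rw [hqt, key t htab, key (a + b) le_rfl]

end Aux

/-- `H₀` is a monad on sets: the Kleisli lifting preserves the flattening condition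
(hence is well defined on `H₀`), and the three monad laws hold. -/
theorem H0_is_monad :
    (∀ (X : Type u) (Y : Type v) (f : X → Traj0 Y), (∀ x, Flat0 (f x)) →
      ∀ p : Traj0 X, Flat0 p → Flat0 (kl0 f p)) ∧
    (∀ (X : Type u) (Y : Type v) (f : X → Traj0 Y), (∀ x, Flat0 (f x)) →
      ∀ x : X, kl0 f (eta0 x) = f x) ∧
    (∀ (X : Type u) (p : Traj0 X), Flat0 p → kl0 eta0 p = p) ∧
    (∀ (X : Type u) (Y : Type v) (Z : Type w) (f : X → Traj0 Y) (g : Y → Traj0 Z),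
      (∀ x, Flat0 (f x)) → (∀ y, Flat0 (g y)) →
      ∀ p : Traj0 X, Flat0 p → kl0 (fun x => kl0 g (f x)) p = kl0 g (kl0 f p)) := by
  refine ⟨fun X Y f hf p hp => kl0_flat f hf p hp, ?_, ?_, ?_⟩
  · -- unit law: f^* ∘ η = f
    intro X Y f hf x
    refine Prod.ext ?_ ?_
    · simp [kl0, eta0]
    · funext t
      rw [kl0_ev]
      by_cases h : (t : ℝ≥0∞) ≤ (eta0 x).1
      · rw [if_pos h]
        have ht0 : t = 0 := by
          simpa [eta0] using h
        simp [eta0, ht0]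
      · rw [if_neg h]
        simp [eta0]
  · -- unit law: η^* = id
    intro X p hp
    refine Prod.ext ?_ ?_
    · by_cases hd : p.1 = ⊤
      · simp [kl0, hd]
      · simp [kl0, hd, eta0]
    · funext t
      rw [kl0_ev]
      by_cases h : (t : ℝ≥0∞) ≤ p.1
      · rw [if_pos h]; rfl
      · rw [if_neg h]
        exact (hp t (not_le.mp h).le).symm
  · -- associativity
    intro X Y Z f g hf hg p hp
    by_cases hd : p.1 = ⊤
    · refine Prod.ext ?_ ?_
      · simp [kl0, hd]
      · funext t
        have ht : (t : ℝ≥0∞) ≤ p.1 := hd ▸ le_top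
        simp [kl0, hd]
    set a := p.1.toNNReal with ha'
    have ha : (a : ℝ≥0∞) = p.1 := ENNReal.coe_toNNReal hd
    by_cases hB : (f (p.2 a)).1 = ⊤
    · refine Prod.ext ?_ ?_
      · simp [kl0, hd, ← ha', hB]
      · funext t
        by_cases ht : (t : ℝ≥0∞) ≤ p.1
        · simp [kl0, hd, ← ha', hB, ht]
        · simp [kl0, hd, ← ha', hB, ht]
    set b := (f (p.2 a)).1.toNNReal with hb'
    have hAb : (f (p.2 a)).1 = (b : ℝ≥0∞) := (ENNReal.coe_toNNReal hB).symm
    have hq1 : (kl0 f p).1 = p.1 + (f (p.2 a)).1 := by rw [kl0_dur, if_pos hd]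
    have hq1' : (kl0 f p).1 ≠ ⊤ := by
      rw [hq1, hAb]
      exact ENNReal.add_ne_top.mpr ⟨hd, ENNReal.coe_ne_top⟩
    have hqt : (kl0 f p).1.toNNReal = a + b := by
      rw [hq1, hAb, ← ha, ← ENNReal.coe_add, ENNReal.toNNReal_coe]
    have hqev : (kl0 f p).2 (a + b) = (f (p.2 a)).2 b := kl0_ev_key f p hd
    refine Prod.ext ?_ ?_
    · rw [kl0_dur g (kl0 f p), if_pos hq1', hqt, hqev, hq1,
        kl0_dur (fun x => kl0 g (f x)) p, if_pos hd]
      show p.1 + (kl0 g (f (p.2 a))).1 = _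
      rw [kl0_dur, if_pos hB, add_assoc]
    · funext t
      by_cases ht : (t : ℝ≥0∞) ≤ p.1
      · have ht2 : (t : ℝ≥0∞) ≤ (kl0 f p).1 := by
          rw [hq1]; exact le_trans ht le_self_add
        rw [kl0_ev g (kl0 f p) t, if_pos ht2, kl0_ev f p t, if_pos ht,
          kl0_ev (fun x => kl0 g (f x)) p t, if_pos ht]
        show (kl0 g (f (p.2 t))).2 0 = _
        rw [kl0_ev, if_pos (by simp)]
      · by_cases ht3 : (t : ℝ≥0∞) ≤ p.1 + (f (p.2 a)).1
        · have ht2 : (t : ℝ≥0∞) ≤ (kl0 f p).1 := by rw [hq1]; exact ht3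
          have hsub : ((t - a : ℝ≥0) : ℝ≥0∞) ≤ (f (p.2 a)).1 := by
            rw [ENNReal.coe_sub, ha]
            exact tsub_le_iff_left.mpr ht3
          rw [kl0_ev g (kl0 f p) t, if_pos ht2, kl0_ev f p t, if_neg ht,
            kl0_ev (fun x => kl0 g (f x)) p t, if_neg ht]
          show (kl0 g (f (p.2 a))).2 (t - a) = _
          rw [kl0_ev, if_pos hsub]
        · have ht2 : ¬ (t : ℝ≥0∞) ≤ (kl0 f p).1 := by rw [hq1]; exact ht3
          have hsub : ¬ ((t - a : ℝ≥0) : ℝ≥0∞) ≤ (f (p.2 a)).1 := by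
            rw [ENNReal.coe_sub, ha]
            exact fun h => ht3 (tsub_le_iff_left.mp h)
          rw [kl0_ev g (kl0 f p) t, if_neg ht2, hqt, hqev,
            kl0_ev (fun x => kl0 g (f x)) p t, if_neg ht]
          show (kl0 g (f (p.2 a))).2 (t - a) = _
          rw [kl0_ev, if_neg hsub, tsub_tsub]
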